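/- For every set J of jobs with positive processing times, every integer m ≥ 2, and every ℓ ∈ {1,…,m−1}: C*_max(m−ℓ, J) ≤ (1 + ⌈ℓ/(m−ℓ)⌉)·C*_max(m, J), where ⌈·⌉ denotes the ceiling function. -/

import Mathlib

open Finset

/-- Completion time (load) of machine `i` under schedule `σ` and processing times `p`. -/
noncomputable def mLoad {n m : ℕ} (p : Fin n → ℝ) (σ : Fin n → Fin m) (i : Fin m) : ℝ :=
  ∑ j ∈ Finset.univ.filter (fun j => σ j = i), p j

/-- Makespan of schedule `σ`: the maximum machine completion time. -/
noncomputable def makespan {n m : ℕ} (p : Fin n → ℝ) (σ : Fin n → Fin m) : ℝ :=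
  ⨆ i, mLoad p σ i

/-- Minimum makespan of the jobs with processing times `p` on `m` machines. -/
noncomputable def optMakespan {n : ℕ} (m : ℕ) (p : Fin n → ℝ) : ℝ :=
  ⨅ σ : Fin n → Fin m, makespan p σ

lemma mLoad_nonneg {n m : ℕ} (p : Fin n → ℝ) (hp : ∀ j, 0 < p j) (σ : Fin n → Fin m)
    (i : Fin m) : 0 ≤ mLoad p σ i :=
  Finset.sum_nonneg fun j _ => (hp j).le

lemma mLoad_le_makespan {n m : ℕ} (p : Fin n → ℝ) (σ : Fin n → Fin m) (i : Fin m) :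
    mLoad p σ i ≤ makespan p σ :=
  le_ciSup (Set.Finite.bddAbove (Set.finite_range _)) i

lemma makespan_nonneg {n m : ℕ} [Nonempty (Fin m)] (p : Fin n → ℝ) (hp : ∀ j, 0 < p j)
    (σ : Fin n → Fin m) : 0 ≤ makespan p σ :=
  le_trans (mLoad_nonneg p hp σ (Classical.arbitrary _)) (mLoad_le_makespan p σ _)

/-- `C*_max(m - ℓ, J) ≤ (1 + ⌈ℓ/(m-ℓ)⌉) · C*_max(m, J)` for `1 ≤ ℓ ≤ m - 1`. -/
theorem stmt4 (n m : ℕ) (hm : 2 ≤ m) (p : Fin n → ℝ) (hp : ∀ j, 0 < p j)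
    (ℓ : ℕ) (hℓ1 : 1 ≤ ℓ) (hℓ2 : ℓ < m) :
    optMakespan (m - ℓ) p ≤
      (1 + (⌈(ℓ : ℝ) / ((m : ℝ) - ℓ)⌉₊ : ℝ)) * optMakespan m p := by
  set d := m - ℓ with hdd
  have hd : 0 < d := Nat.sub_pos_of_lt hℓ2
  have hdm : (m : ℝ) - (ℓ : ℝ) = (d : ℝ) := by
    rw [hdd, Nat.cast_sub hℓ2.le]
  rw [hdm]
  set c : ℕ := ⌈(ℓ : ℝ) / (d : ℝ)⌉₊ with hc
  haveI : Nonempty (Fin d) := ⟨⟨0, hd⟩⟩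
  haveI : Nonempty (Fin m) := ⟨⟨0, by omega⟩⟩
  let g : Fin m → Fin d := fun i => ⟨(i : ℕ) % d, Nat.mod_lt _ hd⟩
  -- cardinality of a fiber of g
  have hcard : ∀ k : Fin d, (Finset.univ.filter (fun i : Fin m => g i = k)).card ≤ 1 + c := by
    intro k
    have h1 : (Finset.univ.filter (fun i : Fin m => g i = k)).card ≤ (m - 1) / d + 1 := by
      have := Finset.card_le_card_of_injOn (s := Finset.univ.filter (fun i : Fin m => g i = k)) (t := Finset.range ((m - 1) / d + 1))
        (fun i : Fin m => (i : ℕ) / d) ?_ ?_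
      · simpa using this
      · intro i hi
        simp only [Finset.mem_range]
        have : (i : ℕ) ≤ m - 1 := by omega
        have := Nat.div_le_div_right (c := d) this
        simpa [Finset.mem_range] using Nat.lt_succ_of_le this
      · intro i hi i' hi' hii
        simp only [Finset.mem_coe, Finset.mem_filter, Finset.mem_univ, true_and] at hi hi'
        have e1 : (i : ℕ) % d = k := congrArg Fin.val hi
        have e2 : (i' : ℕ) % d = k := congrArg Fin.val hi'
        have hii' : (i : ℕ) / d = (i' : ℕ) / d := hii
        apply Fin.ext
        calc (i : ℕ) = d * ((i : ℕ) / d) + (i : ℕ) % d := (Nat.div_add_mod _ _).symm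
          _ = d * ((i' : ℕ) / d) + (i' : ℕ) % d := by rw [hii', e1, e2]
          _ = (i' : ℕ) := Nat.div_add_mod _ _
    have h2 : (m - 1) / d ≤ c := by
      set q := (m - 1) / d with hq
      rcases Nat.eq_zero_or_pos q with h0 | h0
      · omega
      · have hqd : q * d ≤ m - 1 := Nat.div_mul_le_self _ _
        obtain ⟨r, hr⟩ : ∃ r, q = r + 1 := ⟨q - 1, by omega⟩
        have hle : r * d ≤ ℓ - 1 := by
          have : q * d = r * d + d := by rw [hr, add_mul, one_mul]
          omega
        have : r < c := by
          rw [hc, Nat.lt_ceil]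
          rw [lt_div_iff₀ (by exact_mod_cast hd : (0:ℝ) < (d:ℝ))]
          have h : (r * d : ℕ) < ℓ := by omega
          exact_mod_cast h
        omega
    omega
  -- key inequality for each schedule
  have key : ∀ σ : Fin n → Fin m, makespan p (g ∘ σ) ≤ (1 + (c : ℝ)) * makespan p σ := by
    intro σ
    have hms := makespan_nonneg p hp σ
    apply ciSup_le
    intro k
    have hfiber : mLoad p (g ∘ σ) k
        = ∑ i ∈ Finset.univ.filter (fun i : Fin m => g i = k), mLoad p σ i := by
      unfold mLoad
      rw [Finset.sum_fiberwise_eq_sum_filter]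
      apply Finset.sum_congr
      · ext j
        simp [Function.comp]
      · intros; rfl
    rw [hfiber]
    calc ∑ i ∈ Finset.univ.filter (fun i : Fin m => g i = k), mLoad p σ i
        ≤ ∑ _i ∈ Finset.univ.filter (fun i : Fin m => g i = k), makespan p σ :=
          Finset.sum_le_sum fun i _ => mLoad_le_makespan p σ i
      _ = ((Finset.univ.filter (fun i : Fin m => g i = k)).card : ℝ) * makespan p σ := by
          rw [Finset.sum_const, nsmul_eq_mul]
      _ ≤ (1 + (c : ℝ)) * makespan p σ := by
          apply mul_le_mul_of_nonneg_right _ hms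
          exact_mod_cast hcard k
  have hbdd : BddBelow (Set.range fun σ : Fin n → Fin d => makespan p σ) := by
    refine ⟨0, ?_⟩
    rintro x ⟨σ, rfl⟩
    exact makespan_nonneg p hp σ
  have step : ∀ σ : Fin n → Fin m, optMakespan d p ≤ (1 + (c : ℝ)) * makespan p σ :=
    fun σ => le_trans (ciInf_le hbdd (g ∘ σ)) (key σ)
  have hc1 : (0 : ℝ) < 1 + (c : ℝ) := by positivity
  have hdiv : optMakespan d p / (1 + (c : ℝ)) ≤ optMakespan m p := by
    apply le_ciInf
    intro σ
    rw [div_le_iff₀ hc1]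
    calc optMakespan d p ≤ (1 + (c : ℝ)) * makespan p σ := step σ
      _ = makespan p σ * (1 + (c : ℝ)) := mul_comm _ _
  rw [div_le_iff₀ hc1] at hdiv
  calc optMakespan d p ≤ optMakespan m p * (1 + (c : ℝ)) := hdiv
    _ = (1 + (c : ℝ)) * optMakespan m p := mul_comm _ _
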